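/- Let k be an algebraically closed field of characteristic zero and let A ∈ z²k[[z]] have order n. If β₁ and β₂ are two formal power series of order one with A ∘ βᵢ = βᵢ ∘ zⁿ for i = 1,2, then β₂(z) = β₁(εz) for some ε ∈ k with ε^{n-1} = 1. -/

import Mathlib

open PowerSeries

/-- Composition `A ∘ B` of formal power series, well defined (and agreeing with the usual
substitution) when `ord B ≥ 1`. -/
noncomputable def psComp {k : Type*} [Field k] (A B : PowerSeries k) : PowerSeries k :=
  PowerSeries.mk fun n =>
    ∑ i ∈ Finset.range (n + 1), (PowerSeries.coeff i A) * PowerSeries.coeff n (B ^ i)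

section Aux

variable {k : Type*} [Field k]

lemma coeff_psComp (A B : PowerSeries k) (N : ℕ) :
    PowerSeries.coeff N (psComp A B) =
      ∑ i ∈ Finset.range (N + 1), (PowerSeries.coeff i A) * PowerSeries.coeff N (B ^ i) :=
  PowerSeries.coeff_mk _ _

lemma lc_mul_zero {f g : PowerSeries k} {a b N : ℕ}
    (hf : ∀ j < a, coeff j f = 0) (hg : ∀ j < b, coeff j g = 0) (hN : N < a + b) :
    coeff N (f * g) = 0 := by
  rw [PowerSeries.coeff_mul]
  apply Finset.sum_eq_zero
  rintro ⟨p, q⟩ hpq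
  rw [Finset.HasAntidiagonal.mem_antidiagonal] at hpq
  simp only at hpq
  rcases lt_or_ge p a with h | h
  · rw [hf p h, zero_mul]
  · rw [hg q (by omega), mul_zero]

lemma lc_mul_top {f g : PowerSeries k} {a b : ℕ}
    (hf : ∀ j < a, coeff j f = 0) (hg : ∀ j < b, coeff j g = 0) :
    coeff (a + b) (f * g) = coeff a f * coeff b g := by
  rw [PowerSeries.coeff_mul]
  rw [Finset.sum_eq_single (a, b)]
  · rintro ⟨p, q⟩ hpq hne
    rw [Finset.HasAntidiagonal.mem_antidiagonal] at hpq
    simp only at hpq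
    rcases lt_or_ge p a with h | h
    · rw [hf p h, zero_mul]
    · rcases eq_or_lt_of_le h with h' | h'
      · exfalso
        apply hne
        have hq : q = b := by omega
        rw [← h', hq]
      · rw [hg q (by omega), mul_zero]
  · intro h
    exfalso; exact h (Finset.HasAntidiagonal.mem_antidiagonal.mpr rfl)

lemma lc_pow_zero {f : PowerSeries k} (hf : coeff 0 f = 0) (i : ℕ) :
    ∀ N < i, coeff N (f ^ i) = 0 := by
  induction i with
  | zero => intro N hN; omega
  | succ i ih =>
    intro N hN
    rw [pow_succ]
    exact lc_mul_zero (a := i) (b := 1) ih (fun j hj => by interval_cases j; exact hf)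
      (by omega)

lemma lc_pow_top {f : PowerSeries k} (hf : coeff 0 f = 0) (i : ℕ) :
    coeff i (f ^ i) = (coeff 1 f) ^ i := by
  induction i with
  | zero => simp
  | succ i ih =>
    rw [pow_succ, pow_succ, ← ih]
    exact lc_mul_top (a := i) (b := 1) (lc_pow_zero hf i)
      (fun j hj => by interval_cases j; exact hf)

lemma lc_mixed {f g : PowerSeries k} (hf : coeff 0 f = 0) (hg : coeff 0 g = 0)
    (p q : ℕ) : coeff (p + q) (f ^ p * g ^ q) = (coeff 1 f) ^ p * (coeff 1 g) ^ q := by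
  rw [lc_mul_top (lc_pow_zero hf p) (lc_pow_zero hg q), lc_pow_top hf, lc_pow_top hg]

/-- The geometric-sum factor `∑ j < i, β^j γ^(i-1-j)` : low coefficients. -/
lemma geomS_low {β γ : PowerSeries k} (hβ0 : coeff 0 β = 0) (hγ0 : coeff 0 γ = 0)
    (i : ℕ) :
    (∀ a < i - 1, coeff a (∑ j ∈ Finset.range i, β ^ j * γ ^ (i - 1 - j)) = 0) ∧
      coeff (i - 1) (∑ j ∈ Finset.range i, β ^ j * γ ^ (i - 1 - j)) =
        ∑ j ∈ Finset.range i, (coeff 1 β) ^ j * (coeff 1 γ) ^ (i - 1 - j) := by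
  constructor
  · intro a ha
    rw [map_sum]
    apply Finset.sum_eq_zero
    intro j hj
    rw [Finset.mem_range] at hj
    exact lc_mul_zero (a := j) (b := i - 1 - j) (lc_pow_zero hβ0 j) (lc_pow_zero hγ0 _)
      (by omega)
  · rw [map_sum]
    apply Finset.sum_congr rfl
    intro j hj
    rw [Finset.mem_range] at hj
    have h2 := lc_mixed hβ0 hγ0 j (i - 1 - j)
    rw [show j + (i - 1 - j) = i - 1 from by omega] at h2
    exact h2

lemma diff_pow_zero {β γ : PowerSeries k} (hβ0 : coeff 0 β = 0) (hγ0 : coeff 0 γ = 0)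
    {m : ℕ} (hIH : ∀ j ≤ m, coeff j β = coeff j γ) {i N : ℕ} (hi : 1 ≤ i)
    (hN : N < i + m) : coeff N (β ^ i - γ ^ i) = 0 := by
  rw [← geom_sum₂_mul β γ i]
  have hδ : ∀ j < m + 1, coeff j (β - γ) = 0 := by
    intro j hj; rw [map_sub, hIH j (by omega), sub_self]
  exact lc_mul_zero (a := i - 1) (b := m + 1) (geomS_low hβ0 hγ0 i).1 hδ (by omega)

lemma diff_pow_top {β γ : PowerSeries k} (hβ0 : coeff 0 β = 0) (hγ0 : coeff 0 γ = 0)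
    {m : ℕ} (hIH : ∀ j ≤ m, coeff j β = coeff j γ)
    (h1 : coeff 1 β = coeff 1 γ) {i : ℕ} (hi : 1 ≤ i) :
    coeff (i - 1 + (m + 1)) (β ^ i - γ ^ i) =
      (i : k) * (coeff 1 β) ^ (i - 1) * (coeff (m + 1) β - coeff (m + 1) γ) := by
  rw [← geom_sum₂_mul β γ i]
  have hδ : ∀ j < m + 1, coeff j (β - γ) = 0 := by
    intro j hj; rw [map_sub, hIH j (by omega), sub_self]
  rw [lc_mul_top (geomS_low hβ0 hγ0 i).1 hδ, (geomS_low hβ0 hγ0 i).2, map_sub]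
  congr 1
  rw [← h1]
  have : ∀ j ∈ Finset.range i, (coeff 1 β) ^ j * (coeff 1 β) ^ (i - 1 - j)
      = (coeff 1 β) ^ (i - 1) := by
    intro j hj
    rw [Finset.mem_range] at hj
    rw [← pow_add]
    congr 1
    omega
  rw [Finset.sum_congr rfl this, Finset.sum_const, Finset.card_range, nsmul_eq_mul]

/-- Leading coefficient relation from the Böttcher equation. -/
lemma lead_rel {A : PowerSeries k} {n : ℕ} (hn : 2 ≤ n)
    (hA0 : ∀ i < n, coeff i A = 0) {β : PowerSeries k} (hβ0 : coeff 0 β = 0)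
    (hβ : psComp A β = psComp β (PowerSeries.X ^ n)) :
    coeff n A * (coeff 1 β) ^ n = coeff 1 β := by
  have h := congrArg (coeff n) hβ
  rw [coeff_psComp, coeff_psComp] at h
  rw [Finset.sum_eq_single n] at h
  · rw [Finset.sum_eq_single 1] at h
    · rw [lc_pow_top hβ0] at h
      simpa using h
    · intro i hi hne
      rw [Finset.mem_range] at hi
      have hne' : n * i ≠ n := by
        rcases Nat.lt_or_ge i 2 with h2 | h2
        · interval_cases i <;> omega
        · intro heq
          have h3 : n * 2 ≤ n * i := Nat.mul_le_mul_left n h2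
          rw [heq] at h3
          omega
      rw [← pow_mul, PowerSeries.coeff_X_pow, if_neg (Ne.symm hne'), mul_zero]
    · intro h'; exfalso; exact h' (Finset.mem_range.mpr (by omega))
  · intro i hi hne
    rw [Finset.mem_range] at hi
    rcases Nat.lt_or_ge i n with h' | h'
    · rw [hA0 i h', zero_mul]
    · omega
  · intro h'; exfalso; exact h' (Finset.mem_range.mpr (by omega))

/-- Uniqueness of the Böttcher function with a fixed linear coefficient. -/
lemma bott_aux [CharZero k] {A : PowerSeries k} {n : ℕ} (hn : 2 ≤ n)
    (ha : coeff n A ≠ 0) (hA0 : ∀ i < n, coeff i A = 0)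
    {β γ : PowerSeries k} (hβ0 : coeff 0 β = 0) (hγ0 : coeff 0 γ = 0)
    (h1 : coeff 1 β = coeff 1 γ) (h1ne : coeff 1 β ≠ 0)
    (hβ : psComp A β = psComp β (PowerSeries.X ^ n))
    (hγ : psComp A γ = psComp γ (PowerSeries.X ^ n)) : β = γ := by
  ext m
  induction m using Nat.strong_induction_on with
  | _ m IH =>
  match m, IH with
  | 0, _ => rw [hβ0, hγ0]
  | 1, _ => exact h1
  | (M + 2), IH =>
    set M' := M + 1 with hM'
    have hIH : ∀ j ≤ M', coeff j β = coeff j γ := fun j hj => IH j (by omega)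
    set N := n + M' with hNdef
    have hE1 := congrArg (coeff N) hβ
    have hE2 := congrArg (coeff N) hγ
    rw [coeff_psComp, coeff_psComp] at hE1 hE2
    have key : (∑ i ∈ Finset.range (N + 1), coeff i A * coeff N (β ^ i)) -
        (∑ i ∈ Finset.range (N + 1), coeff i A * coeff N (γ ^ i)) =
        coeff n A * ((n : k) * (coeff 1 β) ^ (n - 1) *
          (coeff (M' + 1) β - coeff (M' + 1) γ)) := by
      rw [← Finset.sum_sub_distrib]
      have : ∀ i ∈ Finset.range (N + 1),
          coeff i A * coeff N (β ^ i) - coeff i A * coeff N (γ ^ i)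
          = coeff i A * coeff N (β ^ i - γ ^ i) := by
        intro i _; rw [map_sub, mul_sub]
      rw [Finset.sum_congr rfl this, Finset.sum_eq_single n]
      · have : N = n - 1 + (M' + 1) := by omega
        rw [this, diff_pow_top hβ0 hγ0 hIH h1 (by omega)]
      · intro i hi hne
        rw [Finset.mem_range] at hi
        rcases Nat.lt_or_ge i n with h' | h'
        · rw [hA0 i h', zero_mul]
        · rw [diff_pow_zero hβ0 hγ0 hIH (by omega) (by omega), mul_zero]
      · intro h'; exfalso; exact h' (Finset.mem_range.mpr (by omega))
    have rhs0 : (∑ i ∈ Finset.range (N + 1), coeff i β * coeff N ((PowerSeries.X ^ n) ^ i))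
        - (∑ i ∈ Finset.range (N + 1), coeff i γ * coeff N ((PowerSeries.X ^ n) ^ i))
        = 0 := by
      rw [← Finset.sum_sub_distrib]
      apply Finset.sum_eq_zero
      intro i hi
      rw [← sub_mul, ← pow_mul, PowerSeries.coeff_X_pow]
      by_cases hc : n * i = N
      · have hile : i ≤ M' := by
          by_contra hcon
          push_neg at hcon
          have h2 : n * (M' + 1) ≤ n * i := Nat.mul_le_mul_left n (by omega)
          have h5 : 2 * M' ≤ n * M' := Nat.mul_le_mul_right M' hn
          have h6 : n * i = n + M' := by rw [hc, hNdef]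
          have h8 : n * M' ≤ M' := by
            have h7' : n * M' + n ≤ M' + n := by
              calc n * M' + n = n * (M' + 1) := by ring
                _ ≤ n * i := h2
                _ = n + M' := h6
                _ = M' + n := by ring
            exact Nat.le_of_add_le_add_right h7'
          have h9 : 2 * M' ≤ M' := le_trans h5 h8
          omega
        rw [if_pos hc.symm, hIH i hile, sub_self, zero_mul]
      · rw [if_neg (fun h => hc h.symm), mul_zero]
    rw [hE1, hE2, rhs0] at key
    have hnk : (n : k) ≠ 0 := Nat.cast_ne_zero.mpr (by omega)
    have : coeff (M' + 1) β - coeff (M' + 1) γ = 0 := by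
      have hne : coeff n A * ((n : k) * (coeff 1 β) ^ (n - 1)) ≠ 0 := by
        apply mul_ne_zero ha (mul_ne_zero hnk (pow_ne_zero _ h1ne))
      have := key.symm
      rw [← mul_assoc] at this
      exact (mul_eq_zero.mp this).resolve_left hne
    have heq2 : coeff (M' + 1) β = coeff (M' + 1) γ := sub_eq_zero.mp this
    simpa [hM'] using heq2

end Aux

/-- Uniqueness of Böttcher functions up to multiplication of the variable by an `(n-1)`-th root
of unity: if `β₁, β₂` are power series of order one with `A ∘ βᵢ = βᵢ ∘ zⁿ`, then
`β₂(z) = β₁(εz)` for some `ε` with `ε^(n-1) = 1`. -/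
theorem boettcher_unique {k : Type*} [Field k] [IsAlgClosed k] [CharZero k]
    (A : PowerSeries k) (n : ℕ) (hn : 2 ≤ n) (hA : A.order = n)
    (β₁ β₂ : PowerSeries k) (hβ₁ : β₁.order = 1) (hβ₂ : β₂.order = 1)
    (h₁ : psComp A β₁ = psComp β₁ (PowerSeries.X ^ n))
    (h₂ : psComp A β₂ = psComp β₂ (PowerSeries.X ^ n)) :
    ∃ ε : k, ε ^ (n - 1) = 1 ∧ β₂ = PowerSeries.rescale ε β₁ := by
  obtain ⟨ha, hA0⟩ := PowerSeries.order_eq_nat.mp hA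
  obtain ⟨hb1, hb0'⟩ := PowerSeries.order_eq_nat.mp (by exact_mod_cast hβ₁)
  obtain ⟨hc1, hc0'⟩ := PowerSeries.order_eq_nat.mp (by exact_mod_cast hβ₂)
  have hb0 : coeff 0 β₁ = 0 := hb0' 0 one_pos
  have hc0 : coeff 0 β₂ = 0 := hc0' 0 one_pos
  set b := coeff 1 β₁ with hbdef
  set c := coeff 1 β₂ with hcdef
  have hrel₁ : coeff n A * b ^ n = b := lead_rel hn hA0 hb0 h₁
  have hrel₂ : coeff n A * c ^ n = c := lead_rel hn hA0 hc0 h₂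
  have hbn : coeff n A * b ^ (n - 1) = 1 := by
    have hb : b ^ n = b ^ (n - 1) * b := by
      rw [← pow_succ]; congr 1; omega
    rw [hb, ← mul_assoc] at hrel₁
    field_simp at hrel₁
    exact hrel₁
  have hcn : coeff n A * c ^ (n - 1) = 1 := by
    have hc : c ^ n = c ^ (n - 1) * c := by
      rw [← pow_succ]; congr 1; omega
    rw [hc, ← mul_assoc] at hrel₂
    field_simp at hrel₂
    exact hrel₂
  set ε : k := c / b with hεdef
  have hε : ε ^ (n - 1) = 1 := by
    have : b ^ (n - 1) = c ^ (n - 1) := by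
      have := hbn.trans hcn.symm
      exact mul_left_cancel₀ ha this
    rw [hεdef, div_pow, ← this, div_self (pow_ne_zero _ hb1)]
  have hεn : ε ^ n = ε := by
    have : n = (n - 1) + 1 := by omega
    rw [this, pow_succ, hε, one_mul]
  refine ⟨ε, hε, ?_⟩
  set γ := PowerSeries.rescale ε β₁ with hγdef
  have hγ0 : coeff 0 γ = 0 := by
    rw [hγdef, PowerSeries.coeff_rescale, hb0, mul_zero]
  have hγ1 : coeff 1 γ = c := by
    rw [hγdef, PowerSeries.coeff_rescale, pow_one, hεdef, div_mul_cancel₀ _ hb1]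
  have hγeq : psComp A γ = psComp γ (PowerSeries.X ^ n) := by
    ext N
    have hL : coeff N (psComp A γ) = ε ^ N * coeff N (psComp A β₁) := by
      rw [coeff_psComp, coeff_psComp, Finset.mul_sum]
      apply Finset.sum_congr rfl
      intro i _
      rw [hγdef, ← map_pow, PowerSeries.coeff_rescale]
      ring
    rw [hL, h₁, coeff_psComp, coeff_psComp, Finset.mul_sum]
    apply Finset.sum_congr rfl
    intro i _
    rw [← pow_mul, PowerSeries.coeff_X_pow]
    by_cases hc' : n * i = N
    · rw [if_pos hc'.symm, mul_one, mul_one, hγdef, PowerSeries.coeff_rescale, ← hc',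
        pow_mul, hεn]
    · rw [if_neg (fun h => hc' h.symm), mul_zero, mul_zero, mul_zero]
  have := bott_aux hn ha hA0 hc0 hγ0 hγ1.symm hc1 h₂ hγeq
  rw [this, hγdef]
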